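/- If π is a bivector field on M such that at every point m the Schouten bracket satisfies [π,π]_m ∈ Im(∧³π_m^#), then π is weakly foliated: for all F, G ∈ C^∞(M) and every m ∈ M, [X_F, X_G]|_m ∈ Im(π_m^#). Explicitly, if [π,π]_m = ∧³π_m^#(ω) for ω ∈ ∧³T_m*M, then [X_F, X_G]|_m = π_m^#(d_m{F,G} − ι_{(X_F)_m ∧ (X_G)_m} ω). -/

import Mathlib

open Matrix

noncomputable def lieBracketVF {n : ℕ} (X Y : (Fin n → ℝ) → (Fin n → ℝ)) :
    (Fin n → ℝ) → (Fin n → ℝ) :=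
  fun m => fderiv ℝ Y m (X m) - fderiv ℝ X m (Y m)

noncomputable def gradf {n : ℕ} (F : (Fin n → ℝ) → ℝ) (m : Fin n → ℝ) : Fin n → ℝ :=
  fun i => fderiv ℝ F m (Pi.single i 1)

noncomputable def ham {n : ℕ} (π : (Fin n → ℝ) → Matrix (Fin n) (Fin n) ℝ)
    (F : (Fin n → ℝ) → ℝ) : (Fin n → ℝ) → (Fin n → ℝ) :=
  fun m => π m *ᵥ gradf F m

def SmoothBiv {n : ℕ} (π : (Fin n → ℝ) → Matrix (Fin n) (Fin n) ℝ) : Prop :=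
  ∀ i j, ContDiff ℝ (⊤ : ℕ∞) fun m => π m i j

def AntiSymmBiv {n : ℕ} (π : (Fin n → ℝ) → Matrix (Fin n) (Fin n) ℝ) : Prop :=
  ∀ m, (π m)ᵀ = -π m

def Foliated {n : ℕ} (π : (Fin n → ℝ) → Matrix (Fin n) (Fin n) ℝ) : Prop :=
  ∀ α β : (Fin n → ℝ) → (Fin n → ℝ), ContDiff ℝ (⊤ : ℕ∞) α → ContDiff ℝ (⊤ : ℕ∞) β →
    ∃ γ : (Fin n → ℝ) → (Fin n → ℝ), ContDiff ℝ (⊤ : ℕ∞) γ ∧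
      ∀ m, lieBracketVF (fun p => π p *ᵥ α p) (fun p => π p *ᵥ β p) m = π m *ᵥ γ m

def WeaklyFoliated {n : ℕ} (π : (Fin n → ℝ) → Matrix (Fin n) (Fin n) ℝ) : Prop :=
  ∀ α β : (Fin n → ℝ) → (Fin n → ℝ), ContDiff ℝ (⊤ : ℕ∞) α → ContDiff ℝ (⊤ : ℕ∞) β →
    ∀ m, ∃ ξ : Fin n → ℝ,
      lieBracketVF (fun p => π p *ᵥ α p) (fun p => π p *ᵥ β p) m = π m *ᵥ ξ

noncomputable def pd {n : ℕ} (f : (Fin n → ℝ) → ℝ) (l : Fin n) (m : Fin n → ℝ) : ℝ :=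
  fderiv ℝ f m (Pi.single l 1)

noncomputable def schouten {n : ℕ} (π : (Fin n → ℝ) → Matrix (Fin n) (Fin n) ℝ)
    (m : Fin n → ℝ) (i j k : Fin n) : ℝ :=
  ∑ l, (π m l i * pd (fun p => π p j k) l m + π m l j * pd (fun p => π p k i) l m
      + π m l k * pd (fun p => π p i j) l m)

noncomputable def pb {n : ℕ} (π : (Fin n → ℝ) → Matrix (Fin n) (Fin n) ℝ)
    (F G : (Fin n → ℝ) → ℝ) (m : Fin n → ℝ) : ℝ :=
  dotProduct (gradf G m) (π m *ᵥ gradf F m)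

noncomputable def jacobianM {n : ℕ} (X : (Fin n → ℝ) → (Fin n → ℝ)) (m : Fin n → ℝ) :
    Matrix (Fin n) (Fin n) ℝ :=
  Matrix.of fun i l => fderiv ℝ (fun p => X p i) m (Pi.single l 1)

noncomputable def lieDerivBiv {n : ℕ} (X : (Fin n → ℝ) → (Fin n → ℝ))
    (π : (Fin n → ℝ) → Matrix (Fin n) (Fin n) ℝ) (m : Fin n → ℝ) :
    Matrix (Fin n) (Fin n) ℝ :=
  (Matrix.of fun i j => fderiv ℝ (fun p => π p i j) m (X m))
    - jacobianM X m * π m - π m * (jacobianM X m)ᵀ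


open Finset

variable {n : ℕ}




lemma single_decomp (v : Fin n → ℝ) : v = ∑ l, v l • (Pi.single l (1:ℝ) : Fin n → ℝ) := by
  simp only [← Pi.single_smul, smul_eq_mul, mul_one, Finset.univ_sum_single]

lemma fderiv_expand (f : (Fin n → ℝ) → ℝ) (m v : Fin n → ℝ) :
    fderiv ℝ f m v = ∑ l, v l * fderiv ℝ f m (Pi.single l 1) := by
  conv_lhs => rw [single_decomp v]
  rw [map_sum]
  simp [smul_eq_mul]

lemma mulVec_apply_eq (π : (Fin n → ℝ) → Matrix (Fin n) (Fin n) ℝ)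
    (α : (Fin n → ℝ) → (Fin n → ℝ)) (i : Fin n) :
    (fun p => (π p *ᵥ α p) i) = fun p => ∑ j, π p i j * α p j := by
  funext p; simp [Matrix.mulVec, dotProduct]

lemma mulVec_comp_contDiff {π : (Fin n → ℝ) → Matrix (Fin n) (Fin n) ℝ}
    {α : (Fin n → ℝ) → (Fin n → ℝ)} (hs : SmoothBiv π) (hα : ContDiff ℝ (⊤:ℕ∞) α) (i : Fin n) :
    ContDiff ℝ (⊤:ℕ∞) fun p => (π p *ᵥ α p) i := by
  rw [mulVec_apply_eq]
  exact ContDiff.sum fun j _ => (hs i j).mul ((contDiff_pi.mp hα) j)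

lemma one_le_coe_top : (1:WithTop ℕ∞) ≤ ((⊤:ℕ∞):WithTop ℕ∞) := by exact_mod_cast le_top

lemma fderiv_mulVec_apply {π : (Fin n → ℝ) → Matrix (Fin n) (Fin n) ℝ}
    {α : (Fin n → ℝ) → (Fin n → ℝ)} (hs : SmoothBiv π) (hα : ContDiff ℝ (⊤:ℕ∞) α)
    (m v : Fin n → ℝ) (i : Fin n) :
    fderiv ℝ (fun p => (π p *ᵥ α p) i) m v
      = ∑ j, (fderiv ℝ (fun p => π p i j) m v * α m j
          + π m i j * fderiv ℝ (fun p => α p j) m v) := by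
  have h1 : ((⊤:ℕ∞):WithTop ℕ∞) ≠ 0 := by simp
  have hd : ∀ j : Fin n, DifferentiableAt ℝ (fun p => π p i j * α p j) m :=
    fun j => (((hs i j).mul ((contDiff_pi.mp hα) j)).differentiable h1 m)
  rw [mulVec_apply_eq]
  rw [fderiv_fun_sum (fun j _ => hd j)]
  rw [ContinuousLinearMap.sum_apply]
  refine Finset.sum_congr rfl fun j _ => ?_
  rw [fderiv_fun_mul ((hs i j).differentiable h1 m)
    (((contDiff_pi.mp hα) j).differentiable h1 m)]
  simp [smul_eq_mul]; ring



lemma sum3_rot {M : Type*} [AddCommMonoid M] (f : Fin n → Fin n → Fin n → M) :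
    ∑ a, ∑ b, ∑ c, f a b c = ∑ c, ∑ a, ∑ b, f a b c :=
  calc ∑ a, ∑ b, ∑ c, f a b c
      = ∑ a, ∑ c, ∑ b, f a b c := Finset.sum_congr rfl fun _ _ => Finset.sum_comm
    _ = ∑ c, ∑ a, ∑ b, f a b c := Finset.sum_comm

lemma sum5_perm {M : Type*} [AddCommMonoid M] (f : Fin n → Fin n → Fin n → Fin n → Fin n → M) :
    ∑ j, ∑ k, ∑ a, ∑ b, ∑ c, f j k a b c = ∑ c, ∑ a, ∑ b, ∑ j, ∑ k, f j k a b c :=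
  calc ∑ j, ∑ k, ∑ a, ∑ b, ∑ c, f j k a b c
      _ = ∑ j, ∑ k, ∑ a, ∑ c, ∑ b, f j k a b c := Finset.sum_congr rfl fun _ _ => Finset.sum_congr rfl fun _ _ => Finset.sum_congr rfl fun _ _ => Finset.sum_comm
      _ = ∑ j, ∑ k, ∑ c, ∑ a, ∑ b, f j k a b c := Finset.sum_congr rfl fun _ _ => Finset.sum_congr rfl fun _ _ => Finset.sum_comm
      _ = ∑ j, ∑ c, ∑ k, ∑ a, ∑ b, f j k a b c := Finset.sum_congr rfl fun _ _ => Finset.sum_comm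
      _ = ∑ c, ∑ j, ∑ k, ∑ a, ∑ b, f j k a b c := Finset.sum_comm
      _ = ∑ c, ∑ j, ∑ a, ∑ k, ∑ b, f j k a b c := Finset.sum_congr rfl fun _ _ => Finset.sum_congr rfl fun _ _ => Finset.sum_comm
      _ = ∑ c, ∑ a, ∑ j, ∑ k, ∑ b, f j k a b c := Finset.sum_congr rfl fun _ _ => Finset.sum_comm
      _ = ∑ c, ∑ a, ∑ j, ∑ b, ∑ k, f j k a b c := Finset.sum_congr rfl fun _ _ => Finset.sum_congr rfl fun _ _ => Finset.sum_congr rfl fun _ _ => Finset.sum_comm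
      _ = ∑ c, ∑ a, ∑ b, ∑ j, ∑ k, f j k a b c := Finset.sum_congr rfl fun _ _ => Finset.sum_congr rfl fun _ _ => Finset.sum_comm


lemma alg (P : Fin n → Fin n → ℝ) (DP : Fin n → Fin n → Fin n → ℝ)
    (A B : Fin n → ℝ) (ω : Fin n → Fin n → Fin n → ℝ)
    (hP : ∀ a b, P a b = -P b a) (hDP : ∀ a b l, DP a b l = -DP b a l)
    (hω : ∀ i j k, (∑ l, (P l i * DP j k l + P l j * DP k i l + P l k * DP i j l))
        = ∑ a, ∑ b, ∑ c, P i a * P j b * P k c * ω a b c) (i : Fin n) :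
    (∑ j, (∑ l, (∑ k, P l k * A k) * DP i j l) * B j)
      - (∑ j, (∑ l, (∑ k, P l k * B k) * DP i j l) * A j)
    = ∑ c, P i c * ((∑ j, ∑ k, A k * B j * DP j k c)
        - ∑ a, ∑ b, (∑ k, P a k * A k) * (∑ k, P b k * B k) * ω a b c) := by
  have e1 : (∑ j, (∑ l, (∑ k, P l k * A k) * DP i j l) * B j)
      = ∑ j, ∑ k, ∑ l, P l k * A k * DP i j l * B j := by
    simp only [Finset.sum_mul]
    exact Finset.sum_congr rfl fun j _ => Finset.sum_comm
  have e2 : (∑ j, (∑ l, (∑ k, P l k * B k) * DP i j l) * A j)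
      = ∑ j, ∑ k, ∑ l, P l j * B j * DP i k l * A k := by
    simp only [Finset.sum_mul]
    exact sum3_rot _
  have e3 : (∑ c, P i c * (∑ j, ∑ k, A k * B j * DP j k c))
      = ∑ j, ∑ k, ∑ l, P i l * (A k * B j * DP j k l) := by
    simp only [Finset.mul_sum]
    exact (sum3_rot _).symm
  have e4 : (∑ j, ∑ k, A k * B j
        * (∑ l, (P l i * DP j k l + P l j * DP k i l + P l k * DP i j l)))
      = ∑ j, ∑ k, ∑ l, A k * B j
        * (P l i * DP j k l + P l j * DP k i l + P l k * DP i j l) := by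
    simp only [Finset.mul_sum]
  -- claim A
  have claimA : (∑ j, (∑ l, (∑ k, P l k * A k) * DP i j l) * B j)
      - (∑ j, (∑ l, (∑ k, P l k * B k) * DP i j l) * A j)
      = (∑ j, ∑ k, A k * B j
          * (∑ l, (P l i * DP j k l + P l j * DP k i l + P l k * DP i j l)))
        + ∑ c, P i c * (∑ j, ∑ k, A k * B j * DP j k c) := by
    rw [e1, e2, e3, e4]
    simp only [← Finset.sum_sub_distrib, ← Finset.sum_add_distrib]
    refine Finset.sum_congr rfl fun j _ => Finset.sum_congr rfl fun k _ =>
      Finset.sum_congr rfl fun l _ => ?_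
    linear_combination (-(A k * B j * DP j k l)) * hP i l
      + (-(A k * B j * P l j)) * hDP k i l
  -- schouten antisymmetry + hω
  have hS : ∀ j k, (∑ l, (P l i * DP j k l + P l j * DP k i l + P l k * DP i j l))
      = -∑ a, ∑ b, ∑ c, P k a * P j b * P i c * ω a b c := by
    intro j k
    rw [← hω k j i, ← Finset.sum_neg_distrib]
    refine Finset.sum_congr rfl fun l _ => ?_
    linear_combination P l i * hDP j k l + P l j * hDP k i l + P l k * hDP i j l
  -- claim B
  have claimB : (∑ j, ∑ k, A k * B j
        * (∑ l, (P l i * DP j k l + P l j * DP k i l + P l k * DP i j l)))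
      = -∑ c, P i c * ∑ a, ∑ b, (∑ k, P a k * A k) * (∑ k, P b k * B k) * ω a b c := by
    calc (∑ j, ∑ k, A k * B j
          * (∑ l, (P l i * DP j k l + P l j * DP k i l + P l k * DP i j l)))
        = ∑ j, ∑ k, A k * B j * -∑ a, ∑ b, ∑ c, P k a * P j b * P i c * ω a b c :=
          Finset.sum_congr rfl fun j _ => Finset.sum_congr rfl fun k _ => by rw [hS j k]
      _ = -∑ j, ∑ k, ∑ a, ∑ b, ∑ c, A k * B j * (P k a * P j b * P i c * ω a b c) := by
          simp only [mul_neg, Finset.mul_sum, Finset.sum_neg_distrib]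
      _ = -∑ c, ∑ a, ∑ b, ∑ j, ∑ k, A k * B j * (P k a * P j b * P i c * ω a b c) := by
          rw [sum5_perm]
      _ = -∑ c, P i c * ∑ a, ∑ b, (∑ k, P a k * A k) * (∑ k, P b k * B k) * ω a b c := by
          simp only [Finset.mul_sum, Finset.sum_mul]
          refine congrArg Neg.neg (Finset.sum_congr rfl fun c _ => Finset.sum_congr rfl
            fun a _ => Finset.sum_congr rfl fun b _ => Finset.sum_congr rfl
            fun j _ => Finset.sum_congr rfl fun k _ => ?_)
          rw [hP a k, hP b j]; ring
  rw [claimA, claimB]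
  simp only [mul_sub, Finset.sum_sub_distrib]
  ring


lemma antisymm_entry {π : (Fin n → ℝ) → Matrix (Fin n) (Fin n) ℝ} (ha : AntiSymmBiv π)
    (p : Fin n → ℝ) (a b : Fin n) : π p a b = -π p b a := by
  have := congrFun (congrFun (ha p) b) a
  simpa [Matrix.transpose_apply] using this

lemma pd_antisymm {π : (Fin n → ℝ) → Matrix (Fin n) (Fin n) ℝ} (ha : AntiSymmBiv π)
    (m : Fin n → ℝ) (a b l : Fin n) :
    pd (fun p => π p a b) l m = -pd (fun p => π p b a) l m := by
  have hfun : (fun p => π p a b) = fun p => -(π p b a) := by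
    funext p; exact antisymm_entry ha p a b
  simp only [pd, hfun, fderiv_neg]
  simp

lemma key {π : (Fin n → ℝ) → Matrix (Fin n) (Fin n) ℝ}
    (hs : SmoothBiv π) (ha : AntiSymmBiv π)
    {α β : (Fin n → ℝ) → (Fin n → ℝ)}
    (hα : ContDiff ℝ (⊤:ℕ∞) α) (hβ : ContDiff ℝ (⊤:ℕ∞) β) (m : Fin n → ℝ)
    (ω : Fin n → Fin n → Fin n → ℝ)
    (hω : ∀ i j k, schouten π m i j k
        = ∑ a, ∑ b, ∑ c, π m i a * π m j b * π m k c * ω a b c) :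
    lieBracketVF (fun p => π p *ᵥ α p) (fun p => π p *ᵥ β p) m
      = π m *ᵥ fun c =>
          fderiv ℝ (fun p => β p c) m (π m *ᵥ α m)
          - fderiv ℝ (fun p => α p c) m (π m *ᵥ β m)
          + (∑ j, ∑ k, α m k * β m j * pd (fun p => π p j k) c m)
          - ∑ a, ∑ b, (π m *ᵥ α m) a * (π m *ᵥ β m) b * ω a b c := by
  have h1 : ((⊤:ℕ∞):WithTop ℕ∞) ≠ 0 := by simp
  have hdα : ∀ c, DifferentiableAt ℝ (fun p => (π p *ᵥ α p) c) m :=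
    fun c => (mulVec_comp_contDiff hs hα c).differentiable h1 m
  have hdβ : ∀ c, DifferentiableAt ℝ (fun p => (π p *ᵥ β p) c) m :=
    fun c => (mulVec_comp_contDiff hs hβ c).differentiable h1 m
  funext i
  have hX : ∀ l, (π m *ᵥ α m) l = ∑ k, π m l k * α m k := fun l => by
    simp [Matrix.mulVec, dotProduct]
  have hY : ∀ l, (π m *ᵥ β m) l = ∑ k, π m l k * β m k := fun l => by
    simp [Matrix.mulVec, dotProduct]
  have hLHS : lieBracketVF (fun p => π p *ᵥ α p) (fun p => π p *ᵥ β p) m i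
      = (∑ j, ((∑ l, (π m *ᵥ α m) l * pd (fun p => π p i j) l m) * β m j
            + π m i j * fderiv ℝ (fun p => β p j) m (π m *ᵥ α m)))
        - (∑ j, ((∑ l, (π m *ᵥ β m) l * pd (fun p => π p i j) l m) * α m j
            + π m i j * fderiv ℝ (fun p => α p j) m (π m *ᵥ β m))) := by
    simp only [lieBracketVF, Pi.sub_apply]
    rw [fderiv_pi hdβ, fderiv_pi hdα, ContinuousLinearMap.pi_apply,
      ContinuousLinearMap.pi_apply]
    rw [fderiv_mulVec_apply hs hβ, fderiv_mulVec_apply hs hα]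
    congr 1
    · refine Finset.sum_congr rfl fun j _ => ?_
      rw [fderiv_expand]
      rfl
    · refine Finset.sum_congr rfl fun j _ => ?_
      rw [fderiv_expand]
      rfl
  rw [hLHS]
  have hRHS : (π m *ᵥ fun c =>
          fderiv ℝ (fun p => β p c) m (π m *ᵥ α m)
          - fderiv ℝ (fun p => α p c) m (π m *ᵥ β m)
          + (∑ j, ∑ k, α m k * β m j * pd (fun p => π p j k) c m)
          - ∑ a, ∑ b, (π m *ᵥ α m) a * (π m *ᵥ β m) b * ω a b c) i
      = (∑ c, π m i c * fderiv ℝ (fun p => β p c) m (π m *ᵥ α m))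
        - (∑ c, π m i c * fderiv ℝ (fun p => α p c) m (π m *ᵥ β m))
        + ∑ c, π m i c * ((∑ j, ∑ k, α m k * β m j * pd (fun p => π p j k) c m)
            - ∑ a, ∑ b, (∑ k, π m a k * α m k) * (∑ k, π m b k * β m k) * ω a b c) := by
    simp only [hX, hY, Matrix.mulVec, dotProduct]
    simp only [mul_add, mul_sub, Finset.sum_add_distrib, Finset.sum_sub_distrib]
    ring
  rw [hRHS]
  have halg := alg (π m) (fun a b l => pd (fun p => π p a b) l m) (α m) (β m) ω
    (fun a b => antisymm_entry ha m a b) (fun a b l => pd_antisymm ha m a b l)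
    (fun i j k => hω i j k) i
  simp only [hX, hY] at *
  simp only [Finset.sum_add_distrib]
  linear_combination halg

lemma top_add_one_le : ((⊤:ℕ∞) : WithTop ℕ∞) + 1 ≤ ((⊤:ℕ∞) : WithTop ℕ∞) := by
  exact_mod_cast le_refl _

lemma grad_contDiff {F : (Fin n → ℝ) → ℝ} (hF : ContDiff ℝ (⊤:ℕ∞) F) :
    ContDiff ℝ (⊤:ℕ∞) (gradf F) := by
  have hf' : ContDiff ℝ (⊤:ℕ∞) (fderiv ℝ F) := hF.fderiv_right top_add_one_le
  refine contDiff_pi.mpr fun i => ?_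
  exact (ContinuousLinearMap.apply ℝ ℝ (Pi.single i 1)).contDiff.comp hf'

lemma grad_symm {F : (Fin n → ℝ) → ℝ} (hF : ContDiff ℝ (⊤:ℕ∞) F) (m : Fin n → ℝ)
    (c l : Fin n) :
    fderiv ℝ (fun p => gradf F p c) m (Pi.single l 1)
      = fderiv ℝ (fun p => gradf F p l) m (Pi.single c 1) := by
  have h1 : ((⊤:ℕ∞):WithTop ℕ∞) ≠ 0 := by simp
  have hf' : ContDiff ℝ (⊤:ℕ∞) (fderiv ℝ F) := hF.fderiv_right top_add_one_le
  have hd : DifferentiableAt ℝ (fderiv ℝ F) m := hf'.differentiable h1 m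
  have hder : ∀ v : Fin n → ℝ, fderiv ℝ (fun p => fderiv ℝ F p v) m
      = (fderiv ℝ (fderiv ℝ F) m).flip v := by
    intro v
    have := fderiv_clm_apply (𝕜 := ℝ) (c := fderiv ℝ F) (u := fun _ => v) hd
      (differentiableAt_const v)
    simpa [fderiv_const] using this
  have hsymm := second_derivative_symmetric
    (fun y => (hF.differentiable h1 y).hasFDerivAt) hd.hasFDerivAt
    (Pi.single c 1) (Pi.single l 1)
  show fderiv ℝ (fun p => fderiv ℝ F p (Pi.single c 1)) m (Pi.single l 1)
    = fderiv ℝ (fun p => fderiv ℝ F p (Pi.single l 1)) m (Pi.single c 1)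
  rw [hder, hder]
  simpa using hsymm.symm

lemma fderiv_mul3 {f g k : (Fin n → ℝ) → ℝ} {m : Fin n → ℝ}
    (hf : DifferentiableAt ℝ f m) (hg : DifferentiableAt ℝ g m)
    (hk : DifferentiableAt ℝ k m) (v : Fin n → ℝ) :
    fderiv ℝ (fun p => f p * (g p * k p)) m v
      = fderiv ℝ f m v * (g m * k m) + f m * (fderiv ℝ g m v * k m)
        + f m * (g m * fderiv ℝ k m v) := by
  rw [fderiv_fun_mul hf (hg.fun_mul hk), fderiv_fun_mul hg hk]
  simp only [ContinuousLinearMap.add_apply, ContinuousLinearMap.smul_apply, smul_eq_mul]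
  ring

lemma xi_eq_gradpb {π : (Fin n → ℝ) → Matrix (Fin n) (Fin n) ℝ}
    (hs : SmoothBiv π) (ha : AntiSymmBiv π)
    {F G : (Fin n → ℝ) → ℝ} (hF : ContDiff ℝ (⊤:ℕ∞) F) (hG : ContDiff ℝ (⊤:ℕ∞) G)
    (m : Fin n → ℝ) (c : Fin n) :
    fderiv ℝ (fun p => gradf G p c) m (π m *ᵥ gradf F m)
      - fderiv ℝ (fun p => gradf F p c) m (π m *ᵥ gradf G m)
      + (∑ j, ∑ k, gradf F m k * gradf G m j * pd (fun p => π p j k) c m)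
    = gradf (pb π F G) m c := by
  have h1 : ((⊤:ℕ∞):WithTop ℕ∞) ≠ 0 := by simp
  have dA : ∀ k, DifferentiableAt ℝ (fun p => gradf F p k) m :=
    fun k => ((contDiff_pi.mp (grad_contDiff hF)) k).differentiable h1 m
  have dB : ∀ k, DifferentiableAt ℝ (fun p => gradf G p k) m :=
    fun k => ((contDiff_pi.mp (grad_contDiff hG)) k).differentiable h1 m
  have dP : ∀ j k, DifferentiableAt ℝ (fun p => π p j k) m :=
    fun j k => (hs j k).differentiable h1 m
  have e1 : fderiv ℝ (fun p => gradf G p c) m (π m *ᵥ gradf F m)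
      = ∑ j, ∑ k, π m j k * gradf F m k
          * fderiv ℝ (fun p => gradf G p j) m (Pi.single c 1) := by
    rw [fderiv_expand]
    refine Finset.sum_congr rfl fun l _ => ?_
    rw [grad_symm hG m c l,
      show (π m *ᵥ gradf F m) l = ∑ k, π m l k * gradf F m k from by
        simp [Matrix.mulVec, dotProduct],
      Finset.sum_mul]
  have e2 : fderiv ℝ (fun p => gradf F p c) m (π m *ᵥ gradf G m)
      = -∑ j, ∑ k, gradf G m j
          * (π m j k * fderiv ℝ (fun p => gradf F p k) m (Pi.single c 1)) := by
    calc fderiv ℝ (fun p => gradf F p c) m (π m *ᵥ gradf G m)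
        = ∑ l, ∑ k, π m l k * gradf G m k
            * fderiv ℝ (fun p => gradf F p l) m (Pi.single c 1) := by
          rw [fderiv_expand]
          refine Finset.sum_congr rfl fun l _ => ?_
          rw [grad_symm hF m c l,
            show (π m *ᵥ gradf G m) l = ∑ k, π m l k * gradf G m k from by
              simp [Matrix.mulVec, dotProduct],
            Finset.sum_mul]
      _ = ∑ k, ∑ l, π m l k * gradf G m k
            * fderiv ℝ (fun p => gradf F p l) m (Pi.single c 1) := Finset.sum_comm
      _ = -∑ j, ∑ k, gradf G m j
            * (π m j k * fderiv ℝ (fun p => gradf F p k) m (Pi.single c 1)) := by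
          rw [← Finset.sum_neg_distrib]
          refine Finset.sum_congr rfl fun j _ => ?_
          rw [← Finset.sum_neg_distrib]
          refine Finset.sum_congr rfl fun k _ => ?_
          linear_combination (gradf G m j
            * fderiv ℝ (fun p => gradf F p k) m (Pi.single c 1)) * antisymm_entry ha m k j
  have e3 : gradf (pb π F G) m c = ∑ j, ∑ k,
      (fderiv ℝ (fun p => gradf G p j) m (Pi.single c 1) * (π m j k * gradf F m k)
       + gradf G m j * (fderiv ℝ (fun p => π p j k) m (Pi.single c 1) * gradf F m k)
       + gradf G m j * (π m j k * fderiv ℝ (fun p => gradf F p k) m (Pi.single c 1))) := by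
    have hpbfun : pb π F G = fun p => ∑ j, ∑ k, gradf G p j * (π p j k * gradf F p k) := by
      funext p
      simp [pb, Matrix.mulVec, dotProduct, Finset.mul_sum]
    show fderiv ℝ (pb π F G) m (Pi.single c 1) = _
    rw [hpbfun]
    rw [fderiv_fun_sum (fun j _ => DifferentiableAt.fun_sum fun k _ =>
      (dB j).fun_mul ((dP j k).fun_mul (dA k)))]
    rw [ContinuousLinearMap.sum_apply]
    refine Finset.sum_congr rfl fun j _ => ?_
    rw [fderiv_fun_sum (fun k _ => (dB j).fun_mul ((dP j k).fun_mul (dA k))),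
      ContinuousLinearMap.sum_apply]
    exact Finset.sum_congr rfl fun k _ => fderiv_mul3 (dB j) (dP j k) (dA k) _
  rw [e1, e2, e3]
  simp only [Finset.sum_add_distrib, pd]
  have g1 : (∑ j, ∑ k, π m j k * gradf F m k
        * fderiv ℝ (fun p => gradf G p j) m (Pi.single c 1))
      = ∑ j, ∑ k, fderiv ℝ (fun p => gradf G p j) m (Pi.single c 1)
        * (π m j k * gradf F m k) :=
    Finset.sum_congr rfl fun j _ => Finset.sum_congr rfl fun k _ => by ring
  have g2 : (∑ j, ∑ k, gradf F m k * gradf G m j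
        * fderiv ℝ (fun p => π p j k) m (Pi.single c 1))
      = ∑ j, ∑ k, gradf G m j
        * (fderiv ℝ (fun p => π p j k) m (Pi.single c 1) * gradf F m k) :=
    Finset.sum_congr rfl fun j _ => Finset.sum_congr rfl fun k _ => by ring
  rw [g1, g2]
  ring

theorem weakly_foliated_of_pointwise_jacobiator {n : ℕ}
    (π : (Fin n → ℝ) → Matrix (Fin n) (Fin n) ℝ)
    (hs : SmoothBiv π) (ha : AntiSymmBiv π)
    (h : ∀ m : Fin n → ℝ, ∃ ω : Fin n → Fin n → Fin n → ℝ,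
      ∀ i j k, schouten π m i j k
        = ∑ a, ∑ b, ∑ c, π m i a * π m j b * π m k c * ω a b c) :
    WeaklyFoliated π ∧
      ∀ F G : (Fin n → ℝ) → ℝ, ContDiff ℝ (⊤ : ℕ∞) F → ContDiff ℝ (⊤ : ℕ∞) G →
        ∀ (m : Fin n → ℝ) (ω : Fin n → Fin n → Fin n → ℝ),
          (∀ i j k, schouten π m i j k
            = ∑ a, ∑ b, ∑ c, π m i a * π m j b * π m k c * ω a b c) →
          lieBracketVF (ham π F) (ham π G) m
            = π m *ᵥ (gradf (pb π F G) m
                - fun c => ∑ a, ∑ b, ham π F m a * ham π G m b * ω a b c) := by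
  refine ⟨?_, ?_⟩
  · intro α β hα hβ m
    obtain ⟨ω, hω⟩ := h m
    exact ⟨_, key hs ha hα hβ m ω hω⟩
  · intro F G hF hG m ω hω
    have hk := key hs ha (grad_contDiff hF) (grad_contDiff hG) m ω hω
    show lieBracketVF (fun p => π p *ᵥ gradf F p) (fun p => π p *ᵥ gradf G p) m = _
    rw [hk]
    refine congrArg (fun v => π m *ᵥ v) ?_
    funext c
    have hx := xi_eq_gradpb hs ha hF hG m c
    show fderiv ℝ (fun p => gradf G p c) m (π m *ᵥ gradf F m)
          - fderiv ℝ (fun p => gradf F p c) m (π m *ᵥ gradf G m)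
          + (∑ j, ∑ k, gradf F m k * gradf G m j * pd (fun p => π p j k) c m)
          - (∑ a, ∑ b, (π m *ᵥ gradf F m) a * (π m *ᵥ gradf G m) b * ω a b c)
        = gradf (pb π F G) m c
          - ∑ a, ∑ b, (π m *ᵥ gradf F m) a * (π m *ᵥ gradf G m) b * ω a b c
    linear_combination hx
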